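/- Let SH^> be the F-subalgebra of SH⁺ generated by {D¹_k : k ≥ 0} and SH⁰ the F-subalgebra generated by {D⁰_l : l ≥ 1}. Then the F-linear map SH^> ⊗_F SH⁰ → SH⁺ induced by multiplication (a ⊗ b ↦ a·b) is a linear isomorphism. -/

import Mathlib

noncomputable section

/-- The base field `F = ℂ(κ)`, rational functions over `ℂ`. -/
abbrev F : Type := RatFunc ℂ

/-- The formal parameter `κ ∈ F`. -/
noncomputable def κ : F := RatFunc.X

/-- Commutator `[a,b] = a*b - b*a` in an associative ring. -/
def br {A : Type*} [Ring A] (a b : A) : A := a * b - b * a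

/-- Generators of `SH⁺` : `D0 n` stands for `D⁰_{n+1}` (`l = n+1 ≥ 1`),
`D1 k` stands for `D¹_k` (`k ≥ 0`). -/
inductive Gen : Type
  | D0 : ℕ → Gen
  | D1 : ℕ → Gen

/-- `D⁰_{n+1}` as an element of the free algebra. -/
noncomputable def g0 (n : ℕ) : FreeAlgebra F Gen := FreeAlgebra.ι F (Gen.D0 n)

/-- `D¹_k` as an element of the free algebra. -/
noncomputable def g1 (k : ℕ) : FreeAlgebra F Gen := FreeAlgebra.ι F (Gen.D1 k)

/-- Defining relations of `SH⁺`.  Recall `g0 n = D⁰_{n+1}`, so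
`mix l k` says `[D⁰_{l+1}, D¹_k] = D¹_{(l+1)+k-1}`. -/
inductive SHRel : FreeAlgebra F Gen → FreeAlgebra F Gen → Prop
  | comm0 (l k : ℕ) : SHRel (br (g0 l) (g0 k)) 0
  | mix (l k : ℕ) : SHRel (br (g0 l) (g1 k)) (g1 (l + k))
  | quad : SHRel (3 * br (g1 2) (g1 1) - br (g1 3) (g1 0) + br (g1 1) (g1 0)
      + (κ * (κ - 1)) • (g1 0 * g1 0 + br (g1 1) (g1 0))) 0
  | cubic : SHRel (br (g1 0) (br (g1 0) (g1 1))) 0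

/-- The algebra `SH⁺`, presented by generators and relations. -/
abbrev SHp : Type := RingQuot SHRel

/-- `D⁰_l ∈ SH⁺` (meaningful for `l ≥ 1`). -/
noncomputable def D0 (l : ℕ) : SHp := RingQuot.mkAlgHom F SHRel (g0 (l - 1))

/-- `D¹_k ∈ SH⁺`. -/
noncomputable def D1 (k : ℕ) : SHp := RingQuot.mkAlgHom F SHRel (g1 k)

open scoped TensorProduct

/-- `SH^>`, the subalgebra generated by the `D¹_k`, `k ≥ 0`. -/
noncomputable def SHgt : Subalgebra F SHp := Algebra.adjoin F (Set.range D1)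

/-- `SH⁰`, the subalgebra generated by the `D⁰_l`, `l ≥ 1`. -/
noncomputable def SHzero : Subalgebra F SHp :=
  Algebra.adjoin F (Set.range fun n : ℕ => D0 (n + 1))

/-- The multiplication map `SH^> ⊗_F SH⁰ → SH⁺`, `a ⊗ b ↦ a·b`. -/
noncomputable def mulMap : (SHgt ⊗[F] SHzero) →ₗ[F] SHp :=
  (LinearMap.mul' F SHp).comp
    (TensorProduct.map (Subalgebra.val SHgt).toLinearMap (Subalgebra.val SHzero).toLinearMap)


/-! ### Auxiliary development for the PBW-type decomposition -/

set_option maxHeartbeats 2000000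
set_option synthInstance.maxHeartbeats 1000000

open TrivSqZeroExt LinearMap
open scoped TensorProduct

lemma br_mul_right {A : Type*} [Ring A] (d x y : A) :
    br d (x * y) = x * br d y + br d x * y := by
  simp only [br, mul_sub, sub_mul, ← mul_assoc]
  abel

lemma br_add_right {A : Type*} [Ring A] (d x y : A) :
    br d (x + y) = br d x + br d y := by
  simp only [br, mul_add, add_mul]
  abel

/-- Free algebra on the `D¹`-type generators alone. -/
abbrev FA := FreeAlgebra F ℕ

/-- The generators of `FA`. -/
noncomputable def t (k : ℕ) : FA := FreeAlgebra.ι F k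

/-- Helper algebra morphism used to define the derivations `δ n`. -/
noncomputable def dphi (n : ℕ) : FA →ₐ[F] TrivSqZeroExt FA FA :=
  FreeAlgebra.lift F (fun k => inl (t k) + inr (t (n + k)))

/-- The derivation of `FA` with `δ n (t k) = t (n + k)`. -/
noncomputable def δ (n : ℕ) : FA →ₗ[F] FA where
  toFun x := (dphi n x).snd
  map_add' x y := by simp
  map_smul' c x := by simp

lemma dphi_fst (n : ℕ) (x : FA) : (dphi n x).fst = x := by
  induction x using FreeAlgebra.induction with
  | grade0 r => rw [AlgHom.map_algebraMap]; simp [TrivSqZeroExt.algebraMap_eq_inl']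
  | grade1 k => simp [dphi, t]
  | mul a b ha hb => simp [map_mul, ha, hb]
  | add a b ha hb => simp [map_add, ha, hb]

lemma δ_ι (n k : ℕ) : δ n (t k) = t (n + k) := by
  simp [δ, dphi, t]

lemma δ_mul (n : ℕ) (x y : FA) : δ n (x * y) = x * δ n y + δ n x * y := by
  show (dphi n (x * y)).snd = _
  rw [map_mul, snd_mul, dphi_fst, dphi_fst]
  simp only [smul_eq_mul, MulOpposite.smul_eq_mul_unop, MulOpposite.unop_op]
  rfl

lemma δ_one (n : ℕ) : δ n 1 = 0 := by
  show (dphi n 1).snd = 0; rw [map_one]; rfl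

lemma δ_algebraMap (n : ℕ) (c : F) : δ n (algebraMap F FA c) = 0 := by
  show (dphi n _).snd = 0; rw [AlgHom.map_algebraMap]
  simp [TrivSqZeroExt.algebraMap_eq_inl']

lemma δ_comm (n m : ℕ) (x : FA) : δ n (δ m x) = δ m (δ n x) := by
  induction x using FreeAlgebra.induction with
  | grade0 r => simp [δ_algebraMap]
  | grade1 k =>
      rw [show FreeAlgebra.ι F k = t k from rfl, δ_ι, δ_ι, δ_ι, δ_ι,
        show n + (m + k) = m + (n + k) by ring]
  | mul a b ha hb => simp only [δ_mul, map_add, ha, hb, mul_add, add_mul]; abel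
  | add a b ha hb => simp [map_add, ha, hb]

/-- Mirror of the `quad` relation inside `FA`. -/
noncomputable def r3 : FA := 3 * br (t 2) (t 1) - br (t 3) (t 0) + br (t 1) (t 0)
  + (κ * (κ - 1)) • (t 0 * t 0 + br (t 1) (t 0))

/-- Mirror of the `cubic` relation inside `FA`. -/
noncomputable def r4 : FA := br (t 0) (br (t 0) (t 1))

/-- The δ-closure of the set of defining relations of `SH^>`. -/
inductive SgenP : FA → Prop
  | r3 : SgenP r3
  | r4 : SgenP r4
  | step (n : ℕ) (x : FA) : SgenP x → SgenP (δ n x)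

/-- The two-sided ideal (as a submodule) generated by the δ-closed set `SgenP`. -/
noncomputable def J : Submodule F FA :=
  Submodule.span F {x | ∃ a b s, SgenP s ∧ x = a * s * b}

lemma mem_J (a b s : FA) (hs : SgenP s) : a * s * b ∈ J :=
  Submodule.subset_span ⟨a, b, s, hs, rfl⟩

lemma J_mul_left (y : FA) {x : FA} (hx : x ∈ J) : y * x ∈ J := by
  induction hx using Submodule.span_induction with
  | mem x hx =>
      obtain ⟨a, b, s, hs, rfl⟩ := hx
      rw [show y * (a * s * b) = (y * a) * s * b by rw [← mul_assoc, ← mul_assoc]]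
      exact mem_J _ _ _ hs
  | zero => simpa using J.zero_mem
  | add u v _ _ hu hv => rw [mul_add]; exact J.add_mem hu hv
  | smul c u _ hu => rw [Algebra.mul_smul_comm]; exact J.smul_mem c hu

lemma J_δ (n : ℕ) {x : FA} (hx : x ∈ J) : δ n x ∈ J := by
  induction hx using Submodule.span_induction with
  | mem x hx =>
      obtain ⟨a, b, s, hs, rfl⟩ := hx
      rw [δ_mul, δ_mul, add_mul]
      refine J.add_mem ?_ (J.add_mem ?_ ?_)
      · exact mem_J _ _ _ hs
      · exact mem_J _ _ _ (SgenP.step n s hs)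
      · exact mem_J _ _ _ hs
  | zero => simpa using J.zero_mem
  | add u v _ _ hu hv => rw [map_add]; exact J.add_mem hu hv
  | smul c u _ hu => rw [map_smul]; exact J.smul_mem c hu

/-- The quotient module `V = FA / J`. -/
abbrev V := FA ⧸ J

/-- Left multiplication by `u`, descended to `V`. -/
noncomputable def LbarFun (u : FA) : Module.End F V :=
  Submodule.mapQ J J (LinearMap.mulLeft F u) (fun x hx => J_mul_left u hx)

lemma LbarFun_mk (u x : FA) :
    LbarFun u (Submodule.Quotient.mk x) = Submodule.Quotient.mk (u * x) := rfl

/-- Left multiplication as an algebra morphism `FA →ₐ End V`. -/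
noncomputable def Lbar : FA →ₐ[F] Module.End F V where
  toFun := LbarFun
  map_one' := by
    apply Submodule.linearMap_qext; ext x
    show LbarFun 1 (Submodule.Quotient.mk x) = Submodule.Quotient.mk x
    rw [LbarFun_mk, one_mul]
  map_mul' u v := by
    apply Submodule.linearMap_qext; ext x
    show LbarFun (u*v) (Submodule.Quotient.mk x)
      = LbarFun u (LbarFun v (Submodule.Quotient.mk x))
    rw [LbarFun_mk, LbarFun_mk, LbarFun_mk, mul_assoc]
  map_zero' := by
    apply Submodule.linearMap_qext; ext x
    show LbarFun 0 (Submodule.Quotient.mk x) = 0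
    rw [LbarFun_mk, zero_mul]; exact (Submodule.Quotient.mk_eq_zero J).2 J.zero_mem
  map_add' u v := by
    apply Submodule.linearMap_qext; ext x
    show LbarFun (u+v) (Submodule.Quotient.mk x)
      = LbarFun u (Submodule.Quotient.mk x) + LbarFun v (Submodule.Quotient.mk x)
    rw [LbarFun_mk, LbarFun_mk, LbarFun_mk, add_mul]; rfl
  commutes' c := by
    apply Submodule.linearMap_qext; ext x
    show LbarFun (algebraMap F FA c) (Submodule.Quotient.mk x) = c • Submodule.Quotient.mk x
    rw [LbarFun_mk, show (algebraMap F FA c) * x = c • x from (Algebra.smul_def c x).symm]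
    rfl

/-- The derivation `δ n` descended to `V`. -/
noncomputable def δbar (n : ℕ) : Module.End F V :=
  Submodule.mapQ J J (δ n) (fun x hx => J_δ n hx)

lemma δbar_mk (n : ℕ) (x : FA) :
    δbar n (Submodule.Quotient.mk x) = Submodule.Quotient.mk (δ n x) := rfl

lemma Lbar_zero_of_Sgen {s : FA} (hs : SgenP s) : Lbar s = 0 := by
  apply Submodule.linearMap_qext; ext x
  show Lbar s (Submodule.Quotient.mk x) = 0
  rw [show Lbar s (Submodule.Quotient.mk x) = Submodule.Quotient.mk (s * x) from
    LbarFun_mk s x]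
  rw [show s * x = 1 * s * x by rw [one_mul]]
  exact (Submodule.Quotient.mk_eq_zero J).2 (mem_J 1 x s hs)

lemma δbar_Lbar (n k : ℕ) :
    δbar n * Lbar (t k) - Lbar (t k) * δbar n = Lbar (t (n + k)) := by
  apply Submodule.linearMap_qext; ext x
  show δbar n (Lbar (t k) (Submodule.Quotient.mk x))
      - Lbar (t k) (δbar n (Submodule.Quotient.mk x))
      = Lbar (t (n+k)) (Submodule.Quotient.mk x)
  rw [show Lbar (t k) (Submodule.Quotient.mk x) = Submodule.Quotient.mk (t k * x) from
    LbarFun_mk _ _, δbar_mk, δ_mul, δ_ι, δbar_mk]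
  rw [show Lbar (t k) (Submodule.Quotient.mk (δ n x))
    = Submodule.Quotient.mk (t k * δ n x) from LbarFun_mk _ _]
  rw [show Lbar (t (n+k)) (Submodule.Quotient.mk x)
    = Submodule.Quotient.mk (t (n+k) * x) from LbarFun_mk _ _]
  rw [show (Submodule.Quotient.mk (t k * δ n x + t (n+k) * x) : V)
      = Submodule.Quotient.mk (t k * δ n x) + Submodule.Quotient.mk (t (n+k) * x) from
    map_add J.mkQ _ _]
  abel

lemma δbar_comm (n m : ℕ) : δbar n * δbar m = δbar m * δbar n := by
  apply Submodule.linearMap_qext; ext x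
  show δbar n (δbar m (Submodule.Quotient.mk x)) = δbar m (δbar n (Submodule.Quotient.mk x))
  rw [δbar_mk, δbar_mk, δbar_mk, δbar_mk, δ_comm]

/-- The polynomial algebra corresponding to `SH⁰`. -/
abbrev Pz := MvPolynomial ℕ F

/-- The module on which `SH⁺` will act. -/
abbrev W := V ⊗[F] Pz

lemma rT_mul (f g : Module.End F V) :
    rTensor Pz (f * g) = rTensor Pz f * rTensor Pz g := by
  rw [Module.End.mul_eq_comp, Module.End.mul_eq_comp, rTensor_comp]

/-- Left multiplication operators on `W`. -/
noncomputable def LW : FA →ₐ[F] Module.End F W where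
  toFun u := rTensor Pz (Lbar u)
  map_one' := by show rTensor Pz (Lbar 1) = 1; rw [map_one]; exact rTensor_id Pz V
  map_mul' u v := by
    show rTensor Pz (Lbar (u * v)) = rTensor Pz (Lbar u) * rTensor Pz (Lbar v)
    rw [map_mul, rT_mul]
  map_zero' := by show rTensor Pz (Lbar 0) = 0; rw [map_zero, rTensor_zero]
  map_add' u v := by
    show rTensor Pz (Lbar (u + v)) = rTensor Pz (Lbar u) + rTensor Pz (Lbar v)
    rw [map_add, rTensor_add]
  commutes' c := by
    show rTensor Pz (Lbar (algebraMap F FA c)) = algebraMap F (Module.End F W) c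
    rw [AlgHom.commutes, Module.algebraMap_end_eq_smul_id, Module.algebraMap_end_eq_smul_id,
      rTensor_smul, rTensor_id]

/-- The operator on `W` representing `D⁰_{n+1}`. -/
noncomputable def Xop (n : ℕ) : Module.End F W :=
  rTensor Pz (δbar n) + lTensor V (mulLeft F (MvPolynomial.X n))

lemma rT_lT_comm (f : Module.End F V) (g : Module.End F Pz) :
    rTensor Pz f * lTensor V g = lTensor V g * rTensor Pz f := by
  rw [Module.End.mul_eq_comp, Module.End.mul_eq_comp, rTensor_comp_lTensor, lTensor_comp_rTensor]

lemma lT_mul (f g : Module.End F Pz) :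
    lTensor V (f * g) = lTensor V f * lTensor V g := by
  rw [Module.End.mul_eq_comp, Module.End.mul_eq_comp, lTensor_comp]

lemma mulLeft_comm_P (a b : Pz) :
    (mulLeft F a : Module.End F Pz) * mulLeft F b = mulLeft F b * mulLeft F a := by
  refine LinearMap.ext fun x => ?_
  show a * (b * x) = b * (a * x)
  ring

lemma Xop_comm (n m : ℕ) : Xop n * Xop m = Xop m * Xop n := by
  simp only [Xop, add_mul, mul_add]
  rw [← rT_mul, ← rT_mul, δbar_comm, ← lT_mul, ← lT_mul, mulLeft_comm_P,
    rT_lT_comm (δbar n), rT_lT_comm (δbar m)]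
  abel

lemma Xop_LW (n k : ℕ) :
    Xop n * LW (t k) - LW (t k) * Xop n = LW (t (n + k)) := by
  show Xop n * rTensor Pz (Lbar (t k)) - rTensor Pz (Lbar (t k)) * Xop n
    = rTensor Pz (Lbar (t (n+k)))
  simp only [Xop, add_mul, mul_add]
  rw [← rT_mul, ← rT_mul, rT_lT_comm (Lbar (t k))]
  rw [show rTensor Pz (δbar n * Lbar (t k))
        + lTensor V (mulLeft F (MvPolynomial.X n)) * rTensor Pz (Lbar (t k))
      - (rTensor Pz (Lbar (t k) * δbar n)
        + lTensor V (mulLeft F (MvPolynomial.X n)) * rTensor Pz (Lbar (t k)))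
      = rTensor Pz (δbar n * Lbar (t k)) - rTensor Pz (Lbar (t k) * δbar n) by abel]
  rw [← rTensor_sub, δbar_Lbar]

/-- The action of the free algebra on generators of `SH⁺`. -/
noncomputable def eAlg : FreeAlgebra F Gen →ₐ[F] Module.End F W :=
  FreeAlgebra.lift F (fun g => match g with
    | Gen.D0 n => Xop n
    | Gen.D1 k => LW (t k))

lemma eAlg_g0 (n : ℕ) : eAlg (g0 n) = Xop n := by simp [eAlg, g0]
lemma eAlg_g1 (k : ℕ) : eAlg (g1 k) = LW (t k) := by simp [eAlg, g1]

lemma eAlg_rel : ∀ ⦃x y : FreeAlgebra F Gen⦄, SHRel x y → eAlg x = eAlg y := by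
  intro x y h
  induction h with
  | comm0 l k =>
      simp only [br, map_sub, map_mul, map_zero, eAlg_g0]
      rw [Xop_comm, sub_self]
  | mix l k =>
      simp only [br, map_sub, map_mul, eAlg_g0, eAlg_g1]
      exact Xop_LW l k
  | quad =>
      rw [map_zero]
      have expand : eAlg (3 * br (g1 2) (g1 1) - br (g1 3) (g1 0) + br (g1 1) (g1 0)
          + (κ * (κ - 1)) • (g1 0 * g1 0 + br (g1 1) (g1 0))) = LW r3 := by
        simp only [r3, br, map_add, map_sub, map_mul, map_smul, map_ofNat, eAlg_g1]
      rw [expand, show LW r3 = rTensor Pz (Lbar r3) from rfl,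
        Lbar_zero_of_Sgen SgenP.r3, rTensor_zero]
  | cubic =>
      rw [map_zero]
      have expand : eAlg (br (g1 0) (br (g1 0) (g1 1))) = LW r4 := by
        simp only [r4, br, map_sub, map_mul, eAlg_g1]
      rw [expand, show LW r4 = rTensor Pz (Lbar r4) from rfl,
        Lbar_zero_of_Sgen SgenP.r4, rTensor_zero]

/-- The representation of `SH⁺` on `W`. -/
noncomputable def Ψ : SHp →ₐ[F] Module.End F W := RingQuot.liftAlgHom F ⟨eAlg, eAlg_rel⟩

lemma Ψ_D1 (k : ℕ) : Ψ (D1 k) = LW (t k) := by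
  rw [show D1 k = RingQuot.mkAlgHom F SHRel (g1 k) from rfl, Ψ,
    RingQuot.liftAlgHom_mkAlgHom_apply, eAlg_g1]

lemma Ψ_D0 (n : ℕ) : Ψ (D0 (n+1)) = Xop n := by
  rw [show D0 (n+1) = RingQuot.mkAlgHom F SHRel (g0 n) from rfl, Ψ,
    RingQuot.liftAlgHom_mkAlgHom_apply, eAlg_g0]

/-! ### The splittings -/

/-- `FA → SH⁺` sending `t k` to `D¹_k`. -/
noncomputable def hhat : FA →ₐ[F] SHp := FreeAlgebra.lift F (fun k => D1 k)

lemma hhat_t (k : ℕ) : hhat (t k) = D1 k := by simp [hhat, t]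

lemma D1_def (k : ℕ) : RingQuot.mkAlgHom F SHRel (g1 k) = D1 k := rfl
lemma D0_def (n : ℕ) : RingQuot.mkAlgHom F SHRel (g0 n) = D0 (n+1) := rfl

lemma br_mix (n k : ℕ) : br (D0 (n+1)) (D1 k) = D1 (n+k) := by
  have h := RingQuot.mkAlgHom_rel F (SHRel.mix n k)
  simp only [br, map_sub, map_mul, D1_def, D0_def] at h ⊢
  exact h

lemma hhat_δ (n : ℕ) (x : FA) : hhat (δ n x) = br (D0 (n+1)) (hhat x) := by
  induction x using FreeAlgebra.induction with
  | grade0 r =>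
      rw [δ_algebraMap, map_zero, AlgHom.map_algebraMap]
      simp [br, Algebra.commutes]
  | grade1 k =>
      rw [show FreeAlgebra.ι F k = t k from rfl, δ_ι, hhat_t, hhat_t, br_mix]
  | mul a b ha hb =>
      rw [δ_mul, map_add, map_mul, map_mul, ha, hb, map_mul, br_mul_right]
  | add a b ha hb =>
      rw [map_add, map_add, ha, hb, map_add, br_add_right]

lemma hhat_S {s : FA} (hs : SgenP s) : hhat s = 0 := by
  induction hs with
  | r3 =>
      have h := RingQuot.mkAlgHom_rel F SHRel.quad
      simp only [br, map_add, map_sub, map_mul, map_smul, map_ofNat, map_zero,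
        D1_def] at h
      simp only [r3, br, map_add, map_sub, map_mul, map_smul, map_ofNat, hhat_t]
      exact h
  | r4 =>
      have h := RingQuot.mkAlgHom_rel F SHRel.cubic
      simp only [br, map_sub, map_mul, map_zero, D1_def] at h
      simp only [r4, br, map_sub, map_mul, hhat_t]
      exact h
  | step n x _ ih =>
      rw [hhat_δ, ih]
      simp [br]

lemma hhat_J : J ≤ LinearMap.ker hhat.toLinearMap := by
  rw [J, Submodule.span_le]
  rintro x ⟨a, b, s, hs, rfl⟩
  simp [LinearMap.mem_ker, map_mul, hhat_S hs]

/-- The splitting `V → SH⁺` of the `SH^>`-side. -/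
noncomputable def χ : V →ₗ[F] SHp := J.liftQ hhat.toLinearMap hhat_J

lemma χ_mk (x : FA) : χ (Submodule.Quotient.mk x) = hhat x := rfl

/-- The augmentation `FA → F`. -/
noncomputable def εF : FA →ₐ[F] F := FreeAlgebra.lift F (fun _ => (0:F))

lemma εF_t (k : ℕ) : εF (t k) = 0 := by simp [εF, t]

lemma εF_δ (n : ℕ) (x : FA) : εF (δ n x) = 0 := by
  induction x using FreeAlgebra.induction with
  | grade0 r => rw [δ_algebraMap, map_zero]
  | grade1 k => rw [show FreeAlgebra.ι F k = t k from rfl, δ_ι, εF_t]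
  | mul a b ha hb => rw [δ_mul, map_add, map_mul, map_mul, ha, hb, mul_zero, zero_mul,
      add_zero]
  | add a b ha hb => rw [map_add, map_add, ha, hb, add_zero]

lemma εF_S {s : FA} (hs : SgenP s) : εF s = 0 := by
  induction hs with
  | r3 => simp [r3, br, εF_t]
  | r4 => simp [r4, br, εF_t]
  | step n x _ _ => exact εF_δ n x

lemma εF_J : J ≤ LinearMap.ker εF.toLinearMap := by
  rw [J, Submodule.span_le]
  rintro x ⟨a, b, s, hs, rfl⟩
  simp [LinearMap.mem_ker, map_mul, εF_S hs]

/-- The augmentation of `V`. -/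
noncomputable def εV : V →ₗ[F] F := J.liftQ εF.toLinearMap εF_J

lemma εV_mk (x : FA) : εV (Submodule.Quotient.mk x) = εF x := rfl

lemma D1_mem_gt (k : ℕ) : D1 k ∈ SHgt := Algebra.subset_adjoin ⟨k, rfl⟩
lemma D0_mem_zero (n : ℕ) : D0 (n+1) ∈ SHzero := Algebra.subset_adjoin ⟨n, rfl⟩

lemma D0_comm (l k : ℕ) : D0 (l+1) * D0 (k+1) = D0 (k+1) * D0 (l+1) := by
  have h := RingQuot.mkAlgHom_rel F (SHRel.comm0 l k)
  simp only [br, map_sub, map_mul, map_zero, D0_def, sub_eq_zero] at h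
  exact h

lemma SHzero_comm : ∀ a ∈ (Set.range fun n : ℕ => D0 (n + 1)),
    ∀ b ∈ (Set.range fun n : ℕ => D0 (n + 1)), a * b = b * a := by
  rintro a ⟨l, rfl⟩ b ⟨k, rfl⟩
  exact D0_comm l k

/-- The splitting `Pz → SH⁺` of the `SH⁰`-side. -/
noncomputable def ρ : Pz →ₐ[F] SHp :=
  letI : CommRing SHzero := { SHzero.toRing with
    mul_comm := (Algebra.adjoinCommRingOfComm F SHzero_comm).mul_comm }
  (Subalgebra.val SHzero).comp
    (MvPolynomial.aeval (fun n => (⟨D0 (n+1), D0_mem_zero n⟩ : SHzero)))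

/-- The augmentation of `Pz`. -/
noncomputable def εP : Pz →ₐ[F] F := MvPolynomial.aeval (fun _ => (0:F))

/-- Projection `W → Pz` along the augmentation of `V`. -/
noncomputable def pW : W →ₗ[F] Pz :=
  (TensorProduct.lid F Pz).toLinearMap.comp (rTensor Pz εV)

/-- Projection `W → V` along the augmentation of `Pz`. -/
noncomputable def qW : W →ₗ[F] V :=
  (TensorProduct.rid F V).toLinearMap.comp (lTensor V εP.toLinearMap)

/-- The cyclic vector. -/
noncomputable def oneV : V := Submodule.Quotient.mk 1

lemma pW_tmul (f : Pz) : pW (oneV ⊗ₜ f) = f := by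
  rw [pW, LinearMap.comp_apply, rTensor_tmul,
    show εV oneV = (1:F) from by rw [oneV, εV_mk, map_one]]
  simp

lemma qW_tmul (v : V) : qW (v ⊗ₜ (1:Pz)) = v := by
  rw [qW, LinearMap.comp_apply, lTensor_tmul,
    show εP.toLinearMap (1:Pz) = (1:F) from map_one εP]
  simp

/-- Evaluation of the representation at the cyclic vector. -/
noncomputable def Efull : SHp →ₗ[F] W :=
  (LinearMap.applyₗ (oneV ⊗ₜ (1:Pz) : W)).comp Ψ.toLinearMap

lemma Efull_apply (z : SHp) : Efull z = Ψ z (oneV ⊗ₜ (1:Pz)) := rfl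

lemma δbar_oneV (n : ℕ) : δbar n oneV = 0 := by
  rw [oneV, δbar_mk, δ_one]
  exact (Submodule.Quotient.mk_eq_zero J).2 J.zero_mem

/-- Structure of the action of `SH⁰` on the cyclic line. -/
lemma lemA : ∀ b ∈ SHzero, ∃ f : Pz,
    (∀ g : Pz, Ψ b (oneV ⊗ₜ g) = oneV ⊗ₜ (f * g)) ∧ ρ f = b := by
  intro b hb
  induction hb using Algebra.adjoin_induction with
  | mem x hx =>
      obtain ⟨n, rfl⟩ := hx
      refine ⟨MvPolynomial.X n, fun g => ?_, by simp [ρ]⟩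
      rw [Ψ_D0, Xop, LinearMap.add_apply, rTensor_tmul, lTensor_tmul, δbar_oneV,
        TensorProduct.zero_tmul, zero_add]
      rfl
  | algebraMap r =>
      refine ⟨MvPolynomial.C r, fun g => ?_, by simp [ρ]⟩
      rw [AlgHom.commutes, Module.algebraMap_end_apply,
        show (MvPolynomial.C r : Pz) * g = r • g from (MvPolynomial.smul_eq_C_mul g r).symm,
        TensorProduct.tmul_smul]
  | add x y hx hy ihx ihy =>
      obtain ⟨f₁, h₁, hρ₁⟩ := ihx
      obtain ⟨f₂, h₂, hρ₂⟩ := ihy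
      refine ⟨f₁ + f₂, fun g => ?_, by rw [map_add, hρ₁, hρ₂]⟩
      rw [map_add, LinearMap.add_apply, h₁, h₂, add_mul, TensorProduct.tmul_add]
  | mul x y hx hy ihx ihy =>
      obtain ⟨f₁, h₁, hρ₁⟩ := ihx
      obtain ⟨f₂, h₂, hρ₂⟩ := ihy
      refine ⟨f₁ * f₂, fun g => ?_, by rw [map_mul, hρ₁, hρ₂]⟩
      rw [map_mul, Module.End.mul_apply, h₂, h₁, mul_assoc]

/-- Structure of the action of `SH^>`. -/
lemma lemB : ∀ a ∈ SHgt, ∃ m : Module.End F V,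
    Ψ a = rTensor Pz m ∧ ∀ v : V, χ (m v) = a * χ v := by
  intro a ha
  induction ha using Algebra.adjoin_induction with
  | mem x hx =>
      obtain ⟨k, rfl⟩ := hx
      refine ⟨Lbar (t k), Ψ_D1 k, fun v => ?_⟩
      obtain ⟨w, rfl⟩ := Submodule.Quotient.mk_surjective J v
      rw [show Lbar (t k) (Submodule.Quotient.mk w) = Submodule.Quotient.mk (t k * w) from
        LbarFun_mk _ _, χ_mk, χ_mk, map_mul, hhat_t]
  | algebraMap r =>
      refine ⟨algebraMap F (Module.End F V) r, ?_, fun v => ?_⟩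
      · rw [AlgHom.commutes, Module.algebraMap_end_eq_smul_id,
          Module.algebraMap_end_eq_smul_id, rTensor_smul, rTensor_id]
      · rw [Module.algebraMap_end_apply, map_smul, Algebra.smul_def]
  | add x y hx hy ihx ihy =>
      obtain ⟨m₁, h₁, hχ₁⟩ := ihx
      obtain ⟨m₂, h₂, hχ₂⟩ := ihy
      refine ⟨m₁ + m₂, by rw [map_add, h₁, h₂, rTensor_add], fun v => ?_⟩
      rw [LinearMap.add_apply, map_add, hχ₁, hχ₂, add_mul]
  | mul x y hx hy ihx ihy =>
      obtain ⟨m₁, h₁, hχ₁⟩ := ihx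
      obtain ⟨m₂, h₂, hχ₂⟩ := ihy
      refine ⟨m₁ * m₂, by rw [map_mul, h₁, h₂, rT_mul], fun v => ?_⟩
      rw [Module.End.mul_apply, hχ₁, hχ₂, mul_assoc]

/-- `SH^> → V`. -/
noncomputable def τl : SHgt →ₗ[F] V :=
  qW.comp (Efull.comp (Subalgebra.val SHgt).toLinearMap)

/-- `SH⁰ → Pz`. -/
noncomputable def πl : SHzero →ₗ[F] Pz :=
  pW.comp (Efull.comp (Subalgebra.val SHzero).toLinearMap)

lemma τl_spec (a : SHgt) (m : Module.End F V) (hm : Ψ ↑a = rTensor Pz m) :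
    τl a = m oneV := by
  have h0 : τl a = qW (Ψ ↑a (oneV ⊗ₜ (1:Pz))) := rfl
  rw [h0, hm, rTensor_tmul, qW_tmul]

lemma πl_spec (b : SHzero) (f : Pz)
    (hf : ∀ g : Pz, Ψ ↑b (oneV ⊗ₜ g) = oneV ⊗ₜ (f * g)) : πl b = f := by
  have h0 : πl b = pW (Ψ ↑b (oneV ⊗ₜ (1:Pz))) := rfl
  rw [h0, hf 1, mul_one, pW_tmul]

lemma mulMap_tmul (a : SHgt) (b : SHzero) : mulMap (a ⊗ₜ b) = (a : SHp) * b := by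
  simp [mulMap]

lemma keyC : Efull.comp mulMap = TensorProduct.map τl πl := by
  apply TensorProduct.ext'
  intro a b
  obtain ⟨m, hΨ, hχ⟩ := lemB ↑a a.2
  obtain ⟨f, hf, hρ⟩ := lemA ↑b b.2
  rw [LinearMap.comp_apply, mulMap_tmul, TensorProduct.map_tmul, Efull_apply, map_mul,
    Module.End.mul_apply, show Ψ ↑b (oneV ⊗ₜ (1:Pz)) = oneV ⊗ₜ (f * 1) from hf 1, mul_one,
    hΨ, rTensor_tmul, τl_spec a m hΨ, πl_spec b f hf]

lemma χ_oneV : χ oneV = 1 := by rw [oneV, χ_mk, map_one]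

lemma χ_τl (a : SHgt) : χ (τl a) = ↑a := by
  obtain ⟨m, hΨ, hχ⟩ := lemB ↑a a.2
  rw [τl_spec a m hΨ, hχ, χ_oneV, mul_one]

lemma ρ_πl (b : SHzero) : ρ (πl b) = ↑b := by
  obtain ⟨f, hf, hρ⟩ := lemA ↑b b.2
  rw [πl_spec b f hf, hρ]

lemma τl_inj : Function.Injective τl := by
  intro a₁ a₂ h
  apply Subtype.ext
  rw [← χ_τl a₁, ← χ_τl a₂, h]

lemma πl_inj : Function.Injective πl := by
  intro b₁ b₂ h
  apply Subtype.ext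
  rw [← ρ_πl b₁, ← ρ_πl b₂, h]

instance : Module.Free F (↥SHgt) := Module.Free.of_divisionRing F (↥SHgt)
instance : Module.Flat F (↥SHgt) := Module.Flat.of_free

lemma mulMap_inj : Function.Injective mulMap := by
  have h2 : TensorProduct.map τl πl = (rTensor Pz τl) ∘ₗ (lTensor (↥SHgt) πl) :=
    (rTensor_comp_lTensor (↥SHgt) τl πl).symm
  have hr := Module.Flat.rTensor_preserves_injective_linearMap (M := Pz) τl τl_inj
  have hl := Module.Flat.lTensor_preserves_injective_linearMap (M := ↥SHgt) πl πl_inj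
  have hmap : Function.Injective (TensorProduct.map τl πl) := by
    rw [h2, LinearMap.coe_comp]
    exact hr.comp hl
  intro x y h
  apply hmap
  rw [← keyC, LinearMap.comp_apply, LinearMap.comp_apply, h]

/-! ### Surjectivity -/

lemma brD0_mem (n : ℕ) : ∀ a ∈ SHgt, br (D0 (n+1)) a ∈ SHgt := by
  intro a ha
  induction ha using Algebra.adjoin_induction with
  | mem x hx =>
      obtain ⟨k, rfl⟩ := hx
      rw [br_mix]
      exact Algebra.subset_adjoin ⟨n+k, rfl⟩
  | algebraMap r =>
      rw [show br (D0 (n+1)) (algebraMap F SHp r) = 0 from by simp [br, Algebra.commutes]]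
      exact Subalgebra.zero_mem _
  | add x y hx hy ihx ihy =>
      rw [br_add_right]
      exact Subalgebra.add_mem _ ihx ihy
  | mul x y hx hy ihx ihy =>
      rw [br_mul_right]
      exact Subalgebra.add_mem _ (Subalgebra.mul_mem _ hx ihy)
        (Subalgebra.mul_mem _ ihx hy)

lemma mem_range_mul (a : SHgt) (b : SHzero) : (a : SHp) * b ∈ LinearMap.range mulMap :=
  ⟨a ⊗ₜ b, mulMap_tmul a b⟩

lemma D1_mul_mem (k : ℕ) (w : SHp) (hw : w ∈ LinearMap.range mulMap) :
    D1 k * w ∈ LinearMap.range mulMap := by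
  obtain ⟨u, rfl⟩ := hw
  induction u using TensorProduct.induction_on with
  | zero => rw [map_zero, mul_zero]; exact Submodule.zero_mem _
  | tmul a b =>
      rw [mulMap_tmul, ← mul_assoc]
      exact mem_range_mul ⟨D1 k * ↑a, Subalgebra.mul_mem _ (D1_mem_gt k) a.2⟩ b
  | add u v hu hv =>
      rw [map_add, mul_add]
      exact Submodule.add_mem _ hu hv

lemma D0_mul_mem (n : ℕ) (w : SHp) (hw : w ∈ LinearMap.range mulMap) :
    D0 (n+1) * w ∈ LinearMap.range mulMap := by
  obtain ⟨u, rfl⟩ := hw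
  induction u using TensorProduct.induction_on with
  | zero => rw [map_zero, mul_zero]; exact Submodule.zero_mem _
  | tmul a b =>
      rw [mulMap_tmul,
        show D0 (n+1) * ((a : SHp) * b) = (a : SHp) * (D0 (n+1) * b) + br (D0 (n+1)) ↑a * b
          from by simp only [br, sub_mul, ← mul_assoc]; abel]
      exact Submodule.add_mem _
        (mem_range_mul a ⟨D0 (n+1) * ↑b, Subalgebra.mul_mem _ (D0_mem_zero n) b.2⟩)
        (mem_range_mul ⟨br (D0 (n+1)) ↑a, brD0_mem n ↑a a.2⟩ b)
  | add u v hu hv =>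
      rw [map_add, mul_add]
      exact Submodule.add_mem _ hu hv

lemma mul_mem_range (x : FreeAlgebra F Gen) :
    ∀ w ∈ LinearMap.range mulMap, RingQuot.mkAlgHom F SHRel x * w ∈ LinearMap.range mulMap := by
  induction x using FreeAlgebra.induction with
  | grade0 r =>
      intro w hw
      rw [AlgHom.map_algebraMap, ← Algebra.smul_def]
      exact Submodule.smul_mem _ r hw
  | grade1 g =>
      cases g with
      | D0 n =>
          intro w hw
          rw [show FreeAlgebra.ι F (Gen.D0 n) = g0 n from rfl, D0_def]
          exact D0_mul_mem n w hw
      | D1 k =>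
          intro w hw
          rw [show FreeAlgebra.ι F (Gen.D1 k) = g1 k from rfl, D1_def]
          exact D1_mul_mem k w hw
  | mul a b ha hb =>
      intro w hw
      rw [map_mul, mul_assoc]
      exact ha _ (hb w hw)
  | add a b ha hb =>
      intro w hw
      rw [map_add, add_mul]
      exact Submodule.add_mem _ (ha w hw) (hb w hw)

lemma one_mem_range : (1 : SHp) ∈ LinearMap.range mulMap := by
  have := mem_range_mul 1 1
  simpa using this

lemma mulMap_surj : Function.Surjective mulMap := by
  intro z
  obtain ⟨x, rfl⟩ := RingQuot.mkAlgHom_surjective F SHRel z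
  have h := mul_mem_range x 1 one_mem_range
  rw [mul_one] at h
  exact h

/-- The multiplication map `SH^> ⊗_F SH⁰ → SH⁺` is an isomorphism of `F`-vector spaces. -/
theorem statement3 : Function.Bijective mulMap := ⟨mulMap_inj, mulMap_surj⟩
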